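/- Let A be a commutative ring and (a₁, …, a_d) a regular sequence in A. Then the kernel of the A-module map A^d → A sending the i-th basis vector to aᵢ is generated by the elements aᵢ·e_j − a_j·eᵢ for 1 ≤ i < j ≤ d, where e₁,…,e_d are the standard basis vectors. -/

import Mathlib

open Submodule

private def snocZeroHom (A : Type*) [CommRing A] (d : ℕ) :
    (Fin d → A) →ₗ[A] (Fin (d + 1) → A) where
  toFun u := Fin.snoc u 0
  map_add' u v := by
    ext i
    refine Fin.lastCases ?_ (fun i => ?_) i <;> simp
  map_smul' c u := by
    ext i
    refine Fin.lastCases ?_ (fun i => ?_) i <;> simp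

private lemma snocZeroHom_single {A : Type*} [CommRing A] {d : ℕ} (j : Fin d) :
    (snocZeroHom A d) (Pi.single j 1) = Pi.single j.castSucc (1 : A) := by
  ext i
  refine Fin.lastCases ?_ (fun i => ?_) i
  · simp [snocZeroHom, Pi.single_eq_of_ne (Fin.castSucc_lt_last j).ne']
  · simp [snocZeroHom, Pi.single_apply, Fin.castSucc_inj]

private lemma gen_ker {A : Type*} [CommRing A] {d : ℕ} (a : Fin d → A) (i j : Fin d) :
    ∑ k, (a i • (Pi.single j 1 : Fin d → A) - a j • (Pi.single i 1 : Fin d → A)) k * a k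
      = 0 := by
  simp only [Pi.sub_apply, Pi.smul_apply, smul_eq_mul, sub_mul, Finset.sum_sub_distrib]
  calc (∑ k, a i * (Pi.single j 1 : Fin d → A) k * a k)
        - ∑ k, a j * (Pi.single i 1 : Fin d → A) k * a k
      = a i * a j - a j * a i := by
        congr 1
        · rw [Finset.sum_eq_single j]
          · simp
          · intro b _ hb; simp [Pi.single_eq_of_ne hb]
          · simp
        · rw [Finset.sum_eq_single i]
          · simp
          · intro b _ hb; simp [Pi.single_eq_of_ne hb]
          · simp
    _ = 0 := by ring

private lemma span_syz_le_ker {A : Type*} [CommRing A] {d : ℕ} (a : Fin d → A)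
    {w : Fin d → A}
    (hw : w ∈ Submodule.span A
        {v : Fin d → A | ∃ i j : Fin d, i < j ∧
          v = a i • (Pi.single j 1 : Fin d → A) - a j • (Pi.single i 1 : Fin d → A)}) :
    ∑ k, w k * a k = 0 := by
  induction hw using Submodule.span_induction with
  | mem x hx =>
      obtain ⟨i, j, hij, rfl⟩ := hx
      exact gen_ker a i j
  | zero => simp
  | add x y _ _ hx hy => simp [add_mul, Finset.sum_add_distrib, hx, hy]
  | smul c x _ hx =>
      simp only [Pi.smul_apply, smul_eq_mul, mul_assoc, ← Finset.mul_sum, hx, mul_zero]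

private lemma koszul_key (A : Type*) [CommRing A] :
    ∀ (d : ℕ) (a : Fin d → A)
      (_ : ∀ i : Fin d, ∀ x : A,
        a i * x ∈ Ideal.span (a '' {j | j < i}) → x ∈ Ideal.span (a '' {j | j < i}))
      (v : Fin d → A), ∑ i, v i * a i = 0 →
      v ∈ Submodule.span A
        {w : Fin d → A | ∃ i j : Fin d, i < j ∧
          w = a i • (Pi.single j 1 : Fin d → A) - a j • (Pi.single i 1 : Fin d → A)}
  | 0, a, hW, v, hv => by
      have : v = 0 := Subsingleton.elim _ _
      simp [this]
  | (d + 1), a, hW, v, hv => by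
      set S : Set (Fin (d + 1) → A) :=
        {w : Fin (d + 1) → A | ∃ i j : Fin (d + 1), i < j ∧
          w = a i • (Pi.single j 1 : Fin (d + 1) → A)
            - a j • (Pi.single i 1 : Fin (d + 1) → A)} with hS
      -- step 1: the last coefficient is in the ideal of the previous elements
      have hlast : v (Fin.last d)
          ∈ Ideal.span (a '' {j | j < Fin.last d}) := by
        apply hW
        rw [Fin.sum_univ_castSucc] at hv
        have h2 : a (Fin.last d) * v (Fin.last d)
            = -∑ i : Fin d, v i.castSucc * a i.castSucc := by
          linear_combination hv
        rw [h2]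
        refine neg_mem (Submodule.sum_mem _ fun i _ => ?_)
        exact Ideal.mul_mem_left _ _
          (Ideal.subset_span ⟨i.castSucc, Fin.castSucc_lt_last i, rfl⟩)
      rw [Ideal.span, Finsupp.mem_span_image_iff_linearCombination] at hlast
      obtain ⟨l, hl, hsum⟩ := hlast
      -- the correction term
      set u : Fin (d + 1) → A :=
        ∑ j ∈ l.support, l j • (a j • (Pi.single (Fin.last d) 1 : Fin (d + 1) → A)
          - a (Fin.last d) • (Pi.single j 1 : Fin (d + 1) → A)) with hu
      have hjlast : ∀ j ∈ l.support, j < Fin.last d := fun j hj => hl hj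
      have humem : u ∈ Submodule.span A S := by
        refine Submodule.sum_mem _ fun j hj => Submodule.smul_mem _ _ ?_
        exact Submodule.subset_span ⟨j, Fin.last d, hjlast j hj, rfl⟩
      -- (v - u) last = 0
      have hulast : u (Fin.last d) = v (Fin.last d) := by
        rw [← hsum, Finsupp.linearCombination_apply, Finsupp.sum, hu, Finset.sum_apply]
        refine Finset.sum_congr rfl fun j hj => ?_
        have hne : Fin.last d ≠ j := (ne_of_lt (hjlast j hj)).symm
        simp [Pi.single_eq_of_ne hne, smul_eq_mul]
      have hvu_last : (v - u) (Fin.last d) = 0 := by simp [hulast]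
      -- u is in the kernel
      have huker : ∑ i, u i * a i = 0 := span_syz_le_ker a humem
      have hvu_ker : ∑ i, (v - u) i * a i = 0 := by
        simp [sub_mul, Finset.sum_sub_distrib, hv, huker]
      -- restrict to the first d coordinates
      set a' : Fin d → A := fun i => a i.castSucc with ha'
      have hW' : ∀ i : Fin d, ∀ x : A,
          a' i * x ∈ Ideal.span (a' '' {j | j < i}) →
            x ∈ Ideal.span (a' '' {j | j < i}) := by
        intro i x hx
        have himg : a' '' {j : Fin d | j < i} = a '' {j : Fin (d + 1) | j < i.castSucc} := by
          ext y
          constructor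
          · rintro ⟨j, hj, rfl⟩
            exact ⟨j.castSucc, Fin.castSucc_lt_castSucc_iff.mpr hj, rfl⟩
          · rintro ⟨j, hj, rfl⟩
            have hji : (j : ℕ) < (i : ℕ) := hj
            have hjd : (j : ℕ) < d := lt_trans hji i.2
            exact ⟨⟨j.1, hjd⟩, hji, by simp [ha', Fin.ext_iff]⟩
        rw [himg] at hx ⊢
        exact hW i.castSucc x hx
      have hsum' : ∑ i : Fin d, (v - u) i.castSucc * a' i = 0 := by
        have h3 := hvu_ker
        rw [Fin.sum_univ_castSucc] at h3
        simpa [hvu_last] using h3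
      have hmem := koszul_key A d a' hW' (fun i => (v - u) i.castSucc) hsum'
      -- transport along snocZeroHom
      have hphi : (snocZeroHom A d) (fun i => (v - u) i.castSucc) = v - u := by
        ext i
        refine Fin.lastCases ?_ (fun i => ?_) i
        · simpa [snocZeroHom] using hvu_last.symm
        · simp [snocZeroHom]
      have hvu_mem : v - u ∈ Submodule.span A S := by
        rw [← hphi]
        have h4 := Submodule.mem_map_of_mem (f := snocZeroHom A d) hmem
        rw [Submodule.map_span] at h4
        refine Submodule.span_mono ?_ h4
        rintro _ ⟨w, ⟨i, j, hij, rfl⟩, rfl⟩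
        refine ⟨i.castSucc, j.castSucc, by simpa using hij, ?_⟩
        rw [map_sub, map_smul, map_smul, snocZeroHom_single, snocZeroHom_single]
      simpa using add_mem hvu_mem humem

theorem stmt4 (A : Type*) [CommRing A] (d : ℕ) (a : Fin d → A)
    (hreg : RingTheory.Sequence.IsRegular A (List.ofFn a)) :
    LinearMap.ker (Fintype.linearCombination A a) =
      Submodule.span A
        {v : Fin d → A | ∃ i j : Fin d, i < j ∧
          v = a i • (Pi.single j 1 : Fin d → A) - a j • (Pi.single i 1 : Fin d → A)} := by
  apply le_antisymm
  · intro v hv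
    have hv' : ∑ i, v i * a i = 0 := by
      simpa [Fintype.linearCombination_apply, smul_eq_mul] using LinearMap.mem_ker.mp hv
    refine koszul_key A d a ?_ v hv'
    intro i x hx
    have hlen : i.1 < (List.ofFn a).length := by simp
    have hr := hreg.toIsWeaklyRegular.regular_mod_prev i.1 hlen
    have hset : Ideal.ofList ((List.ofFn a).take i.1) = Ideal.span (a '' {j | j < i}) := by
      unfold Ideal.ofList
      congr 1
      ext r
      simp only [List.mem_take_iff_getElem, List.getElem_ofFn, Set.mem_setOf_eq,
        Set.mem_image]
      constructor
      · rintro ⟨k, hk, rfl⟩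
        have hkd : k < d := by simpa using (lt_of_lt_of_le hk (min_le_right _ _))
        refine ⟨⟨k, hkd⟩, ?_, rfl⟩
        · have : k < i.1 := lt_of_lt_of_le hk (min_le_left _ _)
          simpa [Fin.lt_def] using this
      · rintro ⟨j, hj, rfl⟩
        have hji : (j : ℕ) < (i : ℕ) := hj
        exact ⟨j.1, by simp [hji, j.2], by simp⟩
    have hIi : ((List.ofFn a)[i.1]) = a i := by simp
    rw [hIi] at hr
    have htop : (Ideal.ofList ((List.ofFn a).take i.1) • ⊤ : Submodule A A)
        = Ideal.span (a '' {j | j < i}) := by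
      rw [smul_eq_mul, Ideal.mul_top, hset]
    have hmk : a i • (Submodule.Quotient.mk x :
        A ⧸ (Ideal.ofList ((List.ofFn a).take i.1) • ⊤ : Submodule A A)) = 0 := by
      rw [← Submodule.Quotient.mk_smul, Submodule.Quotient.mk_eq_zero, htop]
      simpa [smul_eq_mul] using hx
    have hx0 := IsSMulRegular.right_eq_zero_of_smul hr hmk
    rw [Submodule.Quotient.mk_eq_zero, htop] at hx0
    exact hx0
  · rw [Submodule.span_le]
    rintro w ⟨i, j, hij, rfl⟩
    rw [SetLike.mem_coe, LinearMap.mem_ker, Fintype.linearCombination_apply]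
    simpa [smul_eq_mul] using gen_ker a i j
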